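/- For a 1 × L rectangle with L > 1 centered at the corner of a quarter-plane, the area of the intersection with the quarter-plane is strictly greater than 1/4 unless the rectangle's long axis makes a 45-degree angle with the sides of the quarter-plane, in which case the area is exactly 1/4. -/

import Mathlib

open Real MeasureTheory

/-- The rectangle of width 1 and length `L`, centered at `c` and rotated by `θ`
(width measured across the first rotated coordinate; at `θ = π/4` the footprint over the
quarter-plane `Q` below is the symmetric isosceles right triangle). -/
def rect (c : ℝ × ℝ) (θ L : ℝ) : Set (ℝ × ℝ) :=
  {p | |Real.cos θ * (p.1 - c.1) + Real.sin θ * (p.2 - c.2)| ≤ 1 / 2 ∧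
       |(-Real.sin θ) * (p.1 - c.1) + Real.cos θ * (p.2 - c.2)| ≤ L / 2}

/-- The quarter-plane modeling the table corner. -/
def Q : Set (ℝ × ℝ) := {p | p.1 ≤ 0 ∧ p.2 ≤ 0}


set_option maxHeartbeats 1000000

open Set

lemma tri_rep (v w : ℝ × ℝ) :
    convexHull ℝ {(0:ℝ×ℝ), v, w} =
      {p | ∃ a b : ℝ, 0 ≤ a ∧ 0 ≤ b ∧ a + b ≤ 1 ∧ p = a • v + b • w} := by
  apply Subset.antisymm
  · apply convexHull_min
    · rintro x hx
      rcases hx with rfl | rfl | rfl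
      · exact ⟨0, 0, le_refl _, le_refl _, by norm_num, by simp⟩
      · exact ⟨1, 0, by norm_num, le_refl _, by norm_num, by simp⟩
      · exact ⟨0, 1, le_refl _, by norm_num, by norm_num, by simp⟩
    · rintro x ⟨a1, b1, ha1, hb1, hab1, rfl⟩ y ⟨a2, b2, ha2, hb2, hab2, rfl⟩ t u ht hu htu
      refine ⟨t*a1 + u*a2, t*b1 + u*b2, by positivity, by positivity, by nlinarith, ?_⟩
      simp only [smul_add, smul_smul]
      module
  · rintro p ⟨a, b, ha, hb, hab, rfl⟩
    have h0 : (0:ℝ×ℝ) ∈ convexHull ℝ {(0:ℝ×ℝ), v, w} := subset_convexHull ℝ _ (by simp)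
    have hv : v ∈ convexHull ℝ {(0:ℝ×ℝ), v, w} := subset_convexHull ℝ _ (by simp)
    have hw : w ∈ convexHull ℝ {(0:ℝ×ℝ), v, w} := subset_convexHull ℝ _ (by simp)
    rcases eq_or_lt_of_le (add_nonneg ha hb) with h | h
    · have ha0 : a = 0 := by linarith [ha, hb]
      have hb0 : b = 0 := by linarith
      simpa [ha0, hb0] using h0
    · set t := a + b with htdef
      have hz : (a/t) • v + (b/t) • w ∈ convexHull ℝ {(0:ℝ×ℝ), v, w} := by
        apply (convex_convexHull ℝ _) hv hw (by positivity) (by positivity)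
        field_simp
        linarith
      have := (convex_convexHull ℝ _) h0 hz (a := 1 - t) (b := t) (by linarith) h.le (by ring)
      have hrw : (1 - t) • (0:ℝ×ℝ) + t • ((a/t) • v + (b/t) • w) = a • v + b • w := by
        rw [smul_zero, zero_add, smul_add, smul_smul, smul_smul,
          mul_div_cancel₀ _ h.ne', mul_div_cancel₀ _ h.ne']
      rwa [hrw] at this

lemma vol_line (a b k : ℝ) (h : a ≠ 0 ∨ b ≠ 0) :
    volume {p : ℝ × ℝ | a * p.1 + b * p.2 = k} = 0 := by
  -- translate to a line through the origin
  set f : ℝ × ℝ →ₗ[ℝ] ℝ := a • (LinearMap.fst ℝ ℝ ℝ) + b • (LinearMap.snd ℝ ℝ ℝ) with hf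
  have hker : (LinearMap.ker f : Set (ℝ × ℝ)) = {p : ℝ × ℝ | a * p.1 + b * p.2 = 0} := by
    ext p
    simp [hf, LinearMap.mem_ker, smul_eq_mul]
  have hne : LinearMap.ker f ≠ ⊤ := by
    intro htop
    have : f (a, b) = 0 := by
      have : (a, b) ∈ LinearMap.ker f := by rw [htop]; trivial
      exact this
    simp [hf, smul_eq_mul] at this
    rcases h with h | h
    · exact h (by nlinarith [sq_nonneg a, sq_nonneg b, mul_self_nonneg a, mul_self_nonneg b])
    · exact h (by nlinarith [mul_self_nonneg a, mul_self_nonneg b])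
  have h0 : volume {p : ℝ × ℝ | a * p.1 + b * p.2 = 0} = 0 := by
    rw [← hker]
    exact MeasureTheory.Measure.addHaar_submodule _ _ hne
  -- pick w with a * w1 + b * w2 = k ; line = (· + w) ⁻¹' line0? we need shift
  have hab : a^2 + b^2 ≠ 0 := by
    rcases h with h | h
    · positivity
    · positivity
  set w : ℝ × ℝ := (k * a / (a^2+b^2), k * b / (a^2+b^2)) with hw
  have hwk : a * w.1 + b * w.2 = k := by
    rw [hw]
    field_simp
  have hset : {p : ℝ × ℝ | a * p.1 + b * p.2 = k} = (fun p => p - w) ⁻¹' {p : ℝ × ℝ | a * p.1 + b * p.2 = 0} := by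
    ext p
    simp only [mem_preimage, mem_setOf_eq, Prod.fst_sub, Prod.snd_sub]
    constructor
    · intro hp; nlinarith [hwk]
    · intro hp; nlinarith [hwk]
  rw [hset]
  have : (fun p : ℝ × ℝ => p - w) ⁻¹' {p : ℝ × ℝ | a * p.1 + b * p.2 = 0}
      = (fun p : ℝ × ℝ => p + (-w)) ⁻¹' {p : ℝ × ℝ | a * p.1 + b * p.2 = 0} := by
    simp [sub_eq_add_neg]
  rw [this, measure_preimage_add_right volume (-w) _]
  exact h0

lemma vol_T0 : volume {p : ℝ × ℝ | 0 ≤ p.1 ∧ 0 ≤ p.2 ∧ p.1 + p.2 ≤ 1} = ENNReal.ofReal (1/2) := by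
  have hio : volume (regionBetween (fun _ : ℝ => (0:ℝ)) (fun x => 1 - x) (Ioo 0 1)) = ENNReal.ofReal (1/2) := by
    have hint : ∫ y in Ioo (0:ℝ) 1, ((fun x : ℝ => 1 - x) - fun _ : ℝ => (0:ℝ)) y = 1/2 := by
      simp only [Pi.sub_apply, sub_zero]
      rw [← integral_Ioc_eq_integral_Ioo, ← intervalIntegral.integral_of_le (by norm_num)]
      rw [intervalIntegral.integral_sub intervalIntegrable_const intervalIntegral.intervalIntegrable_id]
      simp [integral_id]
      norm_num
    have hg : IntegrableOn (fun x : ℝ => 1 - x) (Ioo (0:ℝ) 1) volume :=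
      (ContinuousOn.integrableOn_compact isCompact_Icc
          ((continuous_const.sub continuous_id).continuousOn)).mono_set Ioo_subset_Icc_self
    rw [MeasureTheory.Measure.volume_eq_prod,
      volume_regionBetween_eq_integral integrableOn_zero hg
        measurableSet_Ioo
        (fun x hx => by simp only [mem_Ioo] at hx; simp; linarith [hx.2]), hint]
  apply le_antisymm
  · -- T0 ⊆ regionBetween ∪ three lines
    have hsub : {p : ℝ × ℝ | 0 ≤ p.1 ∧ 0 ≤ p.2 ∧ p.1 + p.2 ≤ 1} ⊆
        regionBetween (fun _ : ℝ => (0:ℝ)) (fun x => 1 - x) (Ioo 0 1)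
        ∪ {p : ℝ × ℝ | (1:ℝ) * p.1 + 0 * p.2 = 0}
        ∪ {p : ℝ × ℝ | (0:ℝ) * p.1 + 1 * p.2 = 0}
        ∪ {p : ℝ × ℝ | (1:ℝ) * p.1 + 1 * p.2 = 1} := by
      rintro ⟨x, y⟩ ⟨hx, hy, hxy⟩
      simp only [mem_union, mem_setOf_eq, regionBetween, mem_Ioo]
      by_cases h1 : x = 0
      · left; left; right; simp [h1]
      by_cases h2 : y = 0
      · left; right; simp [h2]
      by_cases h3 : x + y = 1
      · right; simpa using h3
      · left; left; left
        refine ⟨⟨lt_of_le_of_ne hx (Ne.symm h1), ?_⟩, lt_of_le_of_ne hy (Ne.symm h2), ?_⟩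
        · rcases lt_or_eq_of_le hxy with h | h
          · linarith
          · exact absurd h h3
        · rcases lt_or_eq_of_le hxy with h | h
          · linarith
          · exact absurd h h3
    calc volume {p : ℝ × ℝ | 0 ≤ p.1 ∧ 0 ≤ p.2 ∧ p.1 + p.2 ≤ 1}
        ≤ volume (regionBetween (fun _ : ℝ => (0:ℝ)) (fun x => 1 - x) (Ioo 0 1)
            ∪ {p : ℝ × ℝ | (1:ℝ) * p.1 + 0 * p.2 = 0}
            ∪ {p : ℝ × ℝ | (0:ℝ) * p.1 + 1 * p.2 = 0}
            ∪ {p : ℝ × ℝ | (1:ℝ) * p.1 + 1 * p.2 = 1}) := measure_mono hsub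
      _ ≤ volume (regionBetween (fun _ : ℝ => (0:ℝ)) (fun x => 1 - x) (Ioo 0 1))
            + volume {p : ℝ × ℝ | (1:ℝ) * p.1 + 0 * p.2 = 0}
            + volume {p : ℝ × ℝ | (0:ℝ) * p.1 + 1 * p.2 = 0}
            + volume {p : ℝ × ℝ | (1:ℝ) * p.1 + 1 * p.2 = 1} := by
          exact le_trans (measure_union_le _ _) (by
            exact add_le_add (le_trans (measure_union_le _ _)
              (add_le_add (measure_union_le _ _) le_rfl)) le_rfl)
      _ = ENNReal.ofReal (1/2) := by
          rw [hio, vol_line 1 0 0 (by norm_num), vol_line 0 1 0 (by norm_num),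
            vol_line 1 1 1 (by norm_num)]
          simp
  · rw [← hio]
    apply measure_mono
    rintro ⟨x, y⟩ hp
    simp only [regionBetween, mem_Ioo, mem_setOf_eq] at hp
    exact ⟨hp.1.1.le, hp.2.1.le, by linarith [hp.2.2]⟩

lemma vol_tri (v w : ℝ × ℝ) :
    volume (convexHull ℝ {(0:ℝ×ℝ), v, w}) = ENNReal.ofReal (|v.1 * w.2 - v.2 * w.1| / 2) := by
  set M : ℝ × ℝ →ₗ[ℝ] ℝ × ℝ := (LinearMap.fst ℝ ℝ ℝ).smulRight v + (LinearMap.snd ℝ ℝ ℝ).smulRight w with hM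
  have hMapp : ∀ q : ℝ × ℝ, M q = q.1 • v + q.2 • w := by
    intro q; simp [hM]
  have himg : M '' {p : ℝ × ℝ | 0 ≤ p.1 ∧ 0 ≤ p.2 ∧ p.1 + p.2 ≤ 1} = convexHull ℝ {(0:ℝ×ℝ), v, w} := by
    rw [tri_rep]
    ext p
    constructor
    · rintro ⟨q, ⟨h1, h2, h3⟩, rfl⟩
      exact ⟨q.1, q.2, h1, h2, h3, (hMapp q).symm⟩
    · rintro ⟨a, b, ha, hb, hab, rfl⟩
      exact ⟨(a, b), ⟨ha, hb, hab⟩, hMapp (a, b)⟩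
  have hdet : LinearMap.det M = v.1 * w.2 - v.2 * w.1 := by
    rw [← LinearMap.det_toMatrix (Module.Basis.finTwoProd ℝ), Matrix.det_fin_two]
    simp [LinearMap.toMatrix_apply, hMapp, Module.Basis.finTwoProd]
    ring
  rw [← himg, MeasureTheory.Measure.addHaar_image_linearMap, vol_T0, hdet,
    ← ENNReal.ofReal_mul (abs_nonneg _)]
  rw [mul_one_div]

def F (c s L : ℝ) : Set (ℝ × ℝ) :=
  {p | |c * p.1 + s * p.2| ≤ 1 / 2 ∧ |(-s) * p.1 + c * p.2| ≤ L / 2 ∧ p.1 ≤ 0 ∧ p.2 ≤ 0}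

lemma convex_F (c s L : ℝ) : Convex ℝ (F c s L) := by
  rintro p ⟨hp1, hp2, hp3, hp4⟩ q ⟨hq1, hq2, hq3, hq4⟩ a b ha hb hab
  rw [abs_le] at hp1 hp2 hq1 hq2
  refine ⟨?_, ?_, ?_, ?_⟩ <;>
    simp only [Prod.fst_add, Prod.snd_add, Prod.smul_fst, Prod.smul_snd, smul_eq_mul]
  · rw [abs_le]; constructor <;> nlinarith
  · rw [abs_le]; constructor <;> nlinarith
  · nlinarith
  · nlinarith

lemma measurable_F (c s L : ℝ) : MeasurableSet (F c s L) := by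
  have hrw : F c s L = {p : ℝ × ℝ | |c * p.1 + s * p.2| ≤ 1/2} ∩
      ({p : ℝ × ℝ | |(-s) * p.1 + c * p.2| ≤ L/2} ∩
        ({p : ℝ × ℝ | p.1 ≤ 0} ∩ {p : ℝ × ℝ | p.2 ≤ 0})) := by
    ext p; simp [F, and_assoc]
  rw [hrw]
  refine (measurableSet_le (by fun_prop) measurable_const).inter
    ((measurableSet_le (by fun_prop) measurable_const).inter
      ((measurableSet_le (by fun_prop) measurable_const).inter
        (measurableSet_le (by fun_prop) measurable_const)))

lemma zero_mem_F (c s L : ℝ) (hL : 0 < L) : (0 : ℝ × ℝ) ∈ F c s L := by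
  simp [F]; positivity

lemma quad_bound (c s L : ℝ) (hL : 0 < L) (A D B : ℝ × ℝ) (hD : D ≠ 0)
    (hAm : A ∈ F c s L) (hDm : D ∈ F c s L) (hBm : B ∈ F c s L)
    (hsA : D.1 * A.2 - D.2 * A.1 ≤ 0) (hsB : 0 ≤ D.1 * B.2 - D.2 * B.1)
    (harea : 1/4 < |A.1 * D.2 - A.2 * D.1| / 2 + |D.1 * B.2 - D.2 * B.1| / 2) :
    1/4 < volume (F c s L) := by
  set T1 := convexHull ℝ {(0:ℝ×ℝ), A, D} with hT1
  set T2 := convexHull ℝ {(0:ℝ×ℝ), D, B} with hT2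
  have hT1sub : T1 ⊆ F c s L :=
    convexHull_min (by rintro x (rfl | rfl | rfl) <;> first | exact zero_mem_F c s L hL | assumption)
      (convex_F c s L)
  have hT2sub : T2 ⊆ F c s L :=
    convexHull_min (by rintro x (rfl | rfl | rfl) <;> first | exact zero_mem_F c s L hL | assumption)
      (convex_F c s L)
  -- half planes
  have hconv1 : Convex ℝ {p : ℝ × ℝ | D.1 * p.2 - D.2 * p.1 ≤ 0} := by
    rintro p hp q hq a b ha hb hab
    simp only [mem_setOf_eq, Prod.fst_add, Prod.snd_add, Prod.smul_fst, Prod.smul_snd,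
      smul_eq_mul] at *
    nlinarith
  have hconv2 : Convex ℝ {p : ℝ × ℝ | 0 ≤ D.1 * p.2 - D.2 * p.1} := by
    rintro p hp q hq a b ha hb hab
    simp only [mem_setOf_eq, Prod.fst_add, Prod.snd_add, Prod.smul_fst, Prod.smul_snd,
      smul_eq_mul] at *
    nlinarith
  have h1 : T1 ⊆ {p : ℝ × ℝ | D.1 * p.2 - D.2 * p.1 ≤ 0} :=
    convexHull_min (by
      rintro x (rfl | rfl | rfl)
      · simp
      · exact hsA
      · simp only [mem_setOf_eq]; linarith [mul_comm x.1 x.2]) hconv1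
  have h2 : T2 ⊆ {p : ℝ × ℝ | 0 ≤ D.1 * p.2 - D.2 * p.1} :=
    convexHull_min (by
      rintro x (rfl | rfl | rfl)
      · simp
      · simp only [mem_setOf_eq]; linarith [mul_comm x.1 x.2]
      · exact hsB) hconv2
  have hinter : volume (T1 ∩ T2) = 0 := by
    refine measure_mono_null ?_ (vol_line (-D.2) D.1 0 ?_)
    · rintro p ⟨hp1, hp2⟩
      have ha := h1 hp1
      have hb := h2 hp2
      simp only [mem_setOf_eq] at *
      linarith
    · by_contra hcon
      push_neg at hcon
      exact hD (Prod.ext_iff.mpr ⟨by simpa using hcon.2, by simpa using neg_eq_zero.mp hcon.1⟩)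
  have hmeas2 : NullMeasurableSet T2 volume :=
    ((((Set.finite_singleton _).insert _ |>.insert _).isCompact_convexHull ℝ).isClosed.measurableSet).nullMeasurableSet
  have hunion : volume (T1 ∪ T2) = volume T1 + volume T2 := measure_union₀ hmeas2 hinter
  have hle : volume (T1 ∪ T2) ≤ volume (F c s L) := measure_mono (union_subset hT1sub hT2sub)
  rw [hunion, hT1, hT2, vol_tri, vol_tri] at hle
  calc (1/4 : ENNReal) = ENNReal.ofReal (1/4) := by
        rw [ENNReal.ofReal_div_of_pos (by norm_num)]; norm_num
    _ < ENNReal.ofReal (|A.1 * D.2 - A.2 * D.1| / 2 + |D.1 * B.2 - D.2 * B.1| / 2) := by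
        rw [ENNReal.ofReal_lt_ofReal_iff (by linarith)]; exact harea
    _ ≤ volume (F c s L) := by
        rw [ENNReal.ofReal_add (by positivity) (by positivity)]
        exact hle

lemma F_neg (c s L : ℝ) : F (-c) (-s) L = F c s L := by
  ext p
  simp only [F, mem_setOf_eq]
  rw [show (-c) * p.1 + (-s) * p.2 = -(c * p.1 + s * p.2) by ring,
    show (-(-s)) * p.1 + (-c) * p.2 = -((-s) * p.1 + c * p.2) by ring, abs_neg, abs_neg]

lemma F_swap (c s L : ℝ) : volume (F c s L) = volume (F s c L) := by
  have hpre : F c s L = Prod.swap ⁻¹' (F s c L) := by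
    ext p
    simp only [F, mem_preimage, mem_setOf_eq, Prod.fst_swap, Prod.snd_swap]
    constructor
    · rintro ⟨h1, h2, h3, h4⟩
      refine ⟨?_, ?_, h4, h3⟩
      · rwa [show s * p.2 + c * p.1 = c * p.1 + s * p.2 from by ring]
      · rw [show (-c) * p.2 + s * p.1 = -((-s) * p.1 + c * p.2) from by ring, abs_neg]
        exact h2
    · rintro ⟨h1, h2, h3, h4⟩
      refine ⟨?_, ?_, h4, h3⟩
      · rwa [show c * p.1 + s * p.2 = s * p.2 + c * p.1 from by ring]
      · rw [show (-s) * p.1 + c * p.2 = -((-c) * p.2 + s * p.1) from by ring, abs_neg]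
        exact h2
  rw [hpre, MeasureTheory.Measure.volume_eq_prod,
    MeasurePreserving.measure_preimage Measure.measurePreserving_swap
      (measurable_F s c L).nullMeasurableSet,
    ← MeasureTheory.Measure.volume_eq_prod]

lemma eq_case (c L : ℝ) (hc2 : c^2 = 1/2) (hL : 1 < L) :
    volume (F c c L) = 1/4 := by
  set r : ℝ := Real.sqrt 2 / 2 with hr
  have hr2 : r^2 = 1/2 := by
    rw [hr]; rw [div_pow, sq_sqrt (by norm_num)]; norm_num
  have hrpos : 0 < r := by rw [hr]; positivity
  have habs : |c| = r := by
    rw [← Real.sqrt_sq_eq_abs, hc2, ← hr2, Real.sqrt_sq hrpos.le]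
  have hFeq : F c c L = convexHull ℝ {(0:ℝ×ℝ), (-r, 0), (0, -r)} := by
    rw [tri_rep]
    ext p
    simp only [F, mem_setOf_eq]
    constructor
    · rintro ⟨h1, _, h3, h4⟩
      refine ⟨-p.1/r, -p.2/r, div_nonneg (by linarith) hrpos.le,
        div_nonneg (by linarith) hrpos.le, ?_, ?_⟩
      · rw [← add_div, div_le_one hrpos]
        have h5 : |c * (p.1 + p.2)| ≤ 1/2 := by
          rwa [show c * (p.1 + p.2) = c * p.1 + c * p.2 from by ring]
        rw [abs_mul, habs] at h5
        have h6 : |p.1 + p.2| ≤ r := le_of_mul_le_mul_left (by nlinarith) hrpos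
        linarith [neg_le_abs (p.1 + p.2)]
      · apply Prod.ext <;> simp <;> field_simp
    · rintro ⟨a, b, ha, hb, hab, rfl⟩
      simp only [Prod.fst_add, Prod.snd_add, Prod.smul_fst, Prod.smul_snd, smul_eq_mul,
        mul_zero, mul_neg, add_zero, zero_add]
      refine ⟨?_, ?_, by nlinarith, by nlinarith⟩
      · rw [show -(c * (a * r)) + -(c * (b * r)) = -(c*r*(a+b)) from by ring, abs_neg, abs_mul,
          abs_mul, habs, abs_of_pos hrpos]
        calc r * r * |a + b| ≤ r * r * 1 := by
              apply mul_le_mul_of_nonneg_left _ (by positivity)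
              rw [abs_le]; constructor <;> nlinarith
          _ = 1/2 := by nlinarith
      · rw [show -(-c * (a * r)) + -(c * (b * r)) = c*r*(a-b) from by ring, abs_mul, abs_mul, habs, abs_of_pos hrpos]
        have : |a - b| ≤ 1 := by rw [abs_le]; constructor <;> nlinarith
        calc r * r * |a - b| ≤ r * r * 1 := by
              apply mul_le_mul_of_nonneg_left this (by positivity)
          _ = 1/2 := by nlinarith
          _ ≤ L/2 := by linarith
  rw [hFeq, vol_tri]
  simp only [mul_zero, mul_neg, zero_mul]
  rw [show (|-(-r * r) - 0| : ℝ) = r * r from by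
    rw [sub_zero, show (-(-r * r) : ℝ) = r * r from by ring,
      abs_of_nonneg (by positivity : (0:ℝ) ≤ r * r)]]
  have hq : r * r / 2 = 1/4 := by nlinarith
  rw [hq, ENNReal.ofReal_div_of_pos (by norm_num)]
  norm_num

lemma mem_F_iff (c s L x y : ℝ) :
    (x, y) ∈ F c s L ↔ |c * x + s * y| ≤ 1/2 ∧ |(-s) * x + c * y| ≤ L/2 ∧ x ≤ 0 ∧ y ≤ 0 :=
  Iff.rfl

lemma case_horiz (s L : ℝ) (hs : s^2 = 1) (hL : 1 < L) : 1/4 < volume (F 0 s L) := by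
  have habs : |s| = 1 := by rw [← Real.sqrt_sq_eq_abs, hs, Real.sqrt_one]
  apply quad_bound 0 s L (by linarith) (-(L/2), 0) (-(L/2), -(1/2)) (0, -(1/2))
  · intro h
    have h' := congrArg Prod.fst h
    simp only [Prod.fst_zero] at h'
    norm_num at h'
    linarith
  · rw [mem_F_iff]
    refine ⟨?_, ?_, by linarith, le_refl _⟩
    · rw [show (0:ℝ) * -(L/2) + s * 0 = 0 from by ring, abs_zero]; norm_num
    · rw [show (-s) * -(L/2) + 0 * 0 = s * (L/2) from by ring, abs_mul, habs, one_mul,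
        abs_of_nonneg (by linarith)]
  · rw [mem_F_iff]
    refine ⟨?_, ?_, by linarith, by norm_num⟩
    · rw [show (0:ℝ) * -(L/2) + s * -(1/2) = -(s * (1/2)) from by ring, abs_neg, abs_mul, habs,
        one_mul, abs_of_nonneg (by norm_num : (0:ℝ) ≤ 1/2)]
    · rw [show (-s) * -(L/2) + 0 * -(1/2) = s * (L/2) from by ring, abs_mul, habs, one_mul,
        abs_of_nonneg (by linarith)]
  · rw [mem_F_iff]
    refine ⟨?_, ?_, le_refl _, by norm_num⟩
    · rw [show (0:ℝ) * 0 + s * -(1/2) = -(s * (1/2)) from by ring, abs_neg, abs_mul, habs,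
        one_mul, abs_of_nonneg (by norm_num : (0:ℝ) ≤ 1/2)]
    · rw [show (-s) * 0 + 0 * -(1/2) = 0 from by ring, abs_zero]; positivity
  · dsimp only; nlinarith
  · dsimp only; nlinarith
  · dsimp only
    rw [show (-(L/2) * -(1/2) - 0 * -(L/2) : ℝ) = L/4 from by ring,
      show (-(L/2) * -(1/2) - -(1/2) * 0 : ℝ) = L/4 from by ring,
      abs_of_nonneg (by linarith : (0:ℝ) ≤ L/4)]
    linarith

lemma case_mid (c s L : ℝ) (hc : 0 < c) (hs : 0 < s) (h1 : c^2 + s^2 = 1) (hL : 1 < L)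
    (h2 : s ≤ c * L) (h3 : c ≤ s * L) (hne : s ≠ c) : 1/4 < volume (F c s L) := by
  set ic : ℝ := 1/(2*c) with hicdef
  set is : ℝ := 1/(2*s) with hisdef
  have hic : c * ic = 1/2 := by rw [hicdef]; field_simp
  have his : s * is = 1/2 := by rw [hisdef]; field_simp
  have hicp : 0 < ic := by rw [hicdef]; positivity
  have hisp : 0 < is := by rw [hisdef]; positivity
  apply quad_bound c s L (by linarith) (-ic, 0) (-(ic/2), -(is/2)) (0, -is)
  · intro h
    have h' := congrArg Prod.fst h
    simp only [Prod.fst_zero] at h'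
    norm_num at h'
    linarith
  · rw [mem_F_iff]
    refine ⟨?_, ?_, by linarith, le_refl _⟩
    · rw [abs_le]; constructor <;> nlinarith
    · rw [abs_le]; constructor <;>
        nlinarith [mul_le_mul_of_nonneg_right h2 hicp.le, mul_pos hs hicp]
  · rw [mem_F_iff]
    refine ⟨?_, ?_, by linarith, by linarith⟩
    · rw [abs_le]; constructor <;> nlinarith
    · rw [abs_le]; constructor <;>
        nlinarith [mul_le_mul_of_nonneg_right h2 hicp.le,
          mul_le_mul_of_nonneg_right h3 hisp.le, mul_pos hs hicp, mul_pos hc hisp]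
  · rw [mem_F_iff]
    refine ⟨?_, ?_, le_refl _, by linarith⟩
    · rw [abs_le]; constructor <;> nlinarith
    · rw [abs_le]; constructor <;>
        nlinarith [mul_le_mul_of_nonneg_right h3 hisp.le, mul_pos hc hisp]
  · dsimp only; nlinarith [mul_pos hicp hisp]
  · dsimp only; nlinarith [mul_pos hicp hisp]
  · dsimp only
    have e : 4*(c*s)*(ic*is) = 1 := by linear_combination (4*s*is)*hic + 2*his
    have hcs : 0 < 1 - 2*(c*s) := by
      nlinarith [sq_nonneg (c - s), lt_of_le_of_ne (sq_nonneg (c-s)) (Ne.symm (pow_ne_zero 2 (sub_ne_zero.mpr (Ne.symm hne))))]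
    rw [show (-ic * -(is/2) - 0 * -(ic/2) : ℝ) = ic*is/2 from by ring,
      show (-(ic/2) * -is - -(is/2) * 0 : ℝ) = ic*is/2 from by ring,
      abs_of_nonneg (by positivity : (0:ℝ) ≤ ic*is/2)]
    nlinarith [mul_pos (mul_pos hicp hisp) hcs]

lemma case_high (c s L : ℝ) (hc : 0 < c) (hs : 0 < s) (h1 : c^2 + s^2 = 1) (hL : 1 < L)
    (h2 : c * L < s) : 1/4 < volume (F c s L) := by
  set is : ℝ := 1/(2*s) with hisdef
  have his : s * is = 1/2 := by rw [hisdef]; field_simp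
  have hisp : 0 < is := by rw [hisdef]; positivity
  have hcs : c < s := by nlinarith
  apply quad_bound c s L (by linarith) (-(L*is), 0) (-((c+s*L)/2), (c*L-s)/2) (0, -is)
  · intro h
    have h' := congrArg Prod.fst h
    simp only [Prod.fst_zero] at h'
    norm_num at h'
    nlinarith
  · rw [mem_F_iff]
    refine ⟨?_, ?_, by nlinarith, le_refl _⟩
    · rw [abs_le]; constructor <;>
        nlinarith [mul_le_mul_of_nonneg_right h2.le hisp.le,
          mul_pos (mul_pos hc (show (0:ℝ) < L by linarith)) hisp, mul_pos hs hisp]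
    · rw [abs_le]; constructor <;> nlinarith [mul_pos hs hisp]
  · rw [mem_F_iff]
    refine ⟨?_, ?_, by nlinarith, by nlinarith⟩
    · rw [show c * -((c+s*L)/2) + s * ((c*L-s)/2) = -(1/2) from by linear_combination (-1/2)*h1,
        abs_neg, abs_of_nonneg (by norm_num : (0:ℝ) ≤ 1/2)]
    · rw [show (-s) * -((c+s*L)/2) + c * ((c*L-s)/2) = L/2 from by linear_combination (L/2)*h1,
        abs_of_nonneg (by linarith : (0:ℝ) ≤ L/2)]
  · rw [mem_F_iff]
    refine ⟨?_, ?_, le_refl _, by linarith⟩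
    · rw [abs_le]; constructor <;> nlinarith
    · rw [abs_le]; constructor <;> nlinarith [mul_pos hc hisp]
  · dsimp only; nlinarith [mul_pos hisp (mul_pos hs (show (0:ℝ) < L by linarith))]
  · dsimp only; nlinarith [mul_pos hs hisp, mul_pos hc hisp]
  · dsimp only
    have hn1 : (0:ℝ) ≤ L*is*(s-c*L)/2 := by
      nlinarith [mul_nonneg (mul_nonneg (by linarith : (0:ℝ) ≤ L) hisp.le)
        (by linarith : (0:ℝ) ≤ s - c*L)]
    have hn2 : (0:ℝ) ≤ (c+s*L)*is/2 := by
      nlinarith [mul_pos hc hisp, mul_pos (mul_pos hs (show (0:ℝ) < L by linarith)) hisp]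
    rw [show (-(L*is) * ((c*L-s)/2) - 0 * -((c+s*L)/2) : ℝ) = L*is*(s-c*L)/2 from by ring,
      show (-((c+s*L)/2) * -is - (c*L-s)/2 * 0 : ℝ) = (c+s*L)*is/2 from by ring,
      abs_of_nonneg hn1, abs_of_nonneg hn2]
    have key : 0 < (L-1) * (2*s - c*(L+1)) :=
      mul_pos (by linarith) (by nlinarith [mul_le_mul_of_nonneg_left hL.le hc.le])
    nlinarith [mul_pos hisp key, his]

lemma case_neg1 (c s L : ℝ) (hc : 0 < c) (hs : s < 0) (h1 : c^2 + s^2 = 1) (hL : 1 < L)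
    (h2 : -s ≤ c * L) (h3 : c ≤ -s * L) : 1/4 < volume (F c s L) := by
  set ic : ℝ := 1/(2*c) with hicdef
  set js : ℝ := 1/(2*(-s)) with hjsdef
  have hsp : 0 < -s := by linarith
  have hic : c * ic = 1/2 := by rw [hicdef]; field_simp
  have hjs : (-s) * js = 1/2 := by
    rw [hjsdef, mul_one_div, div_eq_div_iff (ne_of_gt (by linarith)) (by norm_num)]; ring
  have hicp : 0 < ic := by rw [hicdef]; positivity
  have hjsp : 0 < js := by rw [hjsdef]; exact div_pos one_pos (by linarith)
  apply quad_bound c s L (by linarith) (-ic, 0) (-((c-s*L)/2), (-s-c*L)/2) (0, -js)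
  · intro h
    have h' := congrArg Prod.fst h
    simp only [Prod.fst_zero] at h'
    norm_num at h'
    nlinarith [mul_pos (mul_pos (show (0:ℝ) < -s by linarith) (show (0:ℝ) < L by linarith)) hc]
  · rw [mem_F_iff]
    refine ⟨?_, ?_, by linarith, le_refl _⟩
    · rw [abs_le]; constructor <;> nlinarith
    · rw [abs_le]; constructor <;>
        nlinarith [mul_le_mul_of_nonneg_right h2 hicp.le,
          mul_pos (show (0:ℝ) < -s by linarith) hicp]
  · rw [mem_F_iff]
    refine ⟨?_, ?_, ?_, by linarith⟩
    · rw [show c * -((c-s*L)/2) + s * ((-s-c*L)/2) = -(1/2) from by linear_combination (-1/2)*h1,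
        abs_neg, abs_of_nonneg (by norm_num : (0:ℝ) ≤ 1/2)]
    · rw [show (-s) * -((c-s*L)/2) + c * ((-s-c*L)/2) = -(L/2) from by linear_combination (-L/2)*h1,
        abs_neg, abs_of_nonneg (by linarith : (0:ℝ) ≤ L/2)]
    · nlinarith [mul_pos (mul_pos (show (0:ℝ) < -s by linarith) (show (0:ℝ) < L by linarith)) hc]
  · rw [mem_F_iff]
    refine ⟨?_, ?_, le_refl _, by linarith⟩
    · rw [abs_le]; constructor <;> nlinarith
    · rw [abs_le]; constructor <;>
        nlinarith [mul_le_mul_of_nonneg_right h3 hjsp.le, mul_pos hc hjsp]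
  · dsimp only; nlinarith [mul_nonneg (show (0:ℝ) ≤ s + c*L by linarith) hicp.le]
  · dsimp only; nlinarith [mul_nonneg (show (0:ℝ) ≤ c - s*L by nlinarith) hjsp.le]
  · dsimp only
    have hn1 : (0:ℝ) ≤ ic*(s+c*L)/2 := by
      nlinarith [mul_nonneg (show (0:ℝ) ≤ s + c*L by linarith) hicp.le]
    have hn2 : (0:ℝ) ≤ (c-s*L)*js/2 := by
      nlinarith [mul_nonneg (show (0:ℝ) ≤ c - s*L by nlinarith) hjsp.le]
    rw [show (-ic * ((-s-c*L)/2) - 0 * -((c-s*L)/2) : ℝ) = ic*(s+c*L)/2 from by ring,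
      show (-((c-s*L)/2) * -js - (-s-c*L)/2 * 0 : ℝ) = (c-s*L)*js/2 from by ring,
      abs_of_nonneg hn1, abs_of_nonneg hn2]
    have hsp : 0 < -s := by linarith
    have e : (2*c)*(2*(-s))*(ic*(s+c*L) + js*(c - s*L))
        = (-2*s)*(s+c*L) + (2*c)*(c - s*L) := by
      linear_combination (4*(-s)*(s+c*L))*hic + (4*c*(c-s*L))*hjs
    have hP : 2*c*(-s) < c^2 - s^2 - 2*s*c*L := by
      rcases le_or_gt (-s) c with hcase | hcase
      · nlinarith [mul_nonneg (sub_nonneg.mpr hcase) (show (0:ℝ) ≤ c + -s by linarith),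
          mul_pos (mul_pos hc hsp) (show (0:ℝ) < L - 1 by linarith)]
      · nlinarith [mul_nonneg (show (0:ℝ) ≤ c*L + s by linarith)
          (show (0:ℝ) ≤ c + -s by linarith),
          mul_pos (mul_pos hc (show (0:ℝ) < -s - c by linarith))
            (show (0:ℝ) < L - 1 by linarith)]
    nlinarith [e, hP, mul_pos hc hsp]

lemma case_neg2 (c s L : ℝ) (hc : 0 < c) (hs : s < 0) (h1 : c^2 + s^2 = 1) (hL : 1 < L)
    (h2 : c * L < -s) : 1/4 < volume (F c s L) := by
  set js : ℝ := 1/(2*(-s)) with hjsdef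
  have hsp : 0 < -s := by linarith
  have hjs : (-s) * js = 1/2 := by
    rw [hjsdef, mul_one_div, div_eq_div_iff (ne_of_gt (by linarith)) (by norm_num)]; ring
  have hjsp : 0 < js := by rw [hjsdef]; exact div_pos one_pos (by linarith)
  have hcsL : c < -s*L := by nlinarith
  apply quad_bound c s L (by linarith) (-(L*js), 0) ((c+s*L)/2, (s-c*L)/2) (0, -js)
  · intro h
    have h' := congrArg Prod.snd h
    simp only [Prod.snd_zero] at h'
    norm_num at h'
    nlinarith [mul_pos hc (show (0:ℝ) < L by linarith)]
  · rw [mem_F_iff]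
    refine ⟨?_, ?_, by nlinarith [mul_pos (show (0:ℝ) < L by linarith) hjsp], le_refl _⟩
    · rw [abs_le]; constructor <;>
        nlinarith [mul_le_mul_of_nonneg_right h2.le hjsp.le,
          mul_pos (mul_pos hc (show (0:ℝ) < L by linarith)) hjsp, mul_pos hsp hjsp]
    · rw [abs_le]; constructor <;> nlinarith [mul_pos hsp hjsp]
  · rw [mem_F_iff]
    refine ⟨?_, ?_, by nlinarith, by nlinarith⟩
    · rw [show c * ((c+s*L)/2) + s * ((s-c*L)/2) = 1/2 from by linear_combination (1/2)*h1,
        abs_of_nonneg (by norm_num : (0:ℝ) ≤ 1/2)]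
    · rw [show (-s) * ((c+s*L)/2) + c * ((s-c*L)/2) = -(L/2) from by linear_combination (-L/2)*h1,
        abs_neg, abs_of_nonneg (by linarith : (0:ℝ) ≤ L/2)]
  · rw [mem_F_iff]
    refine ⟨?_, ?_, le_refl _, by linarith⟩
    · rw [abs_le]; constructor <;> nlinarith
    · rw [abs_le]; constructor <;>
        nlinarith [mul_le_mul_of_nonneg_right hcsL.le hjsp.le, mul_pos hc hjsp]
  · dsimp only
    nlinarith [mul_nonneg (mul_nonneg (show (0:ℝ) ≤ L by linarith) hjsp.le)
      (show (0:ℝ) ≤ c*L - s by nlinarith)]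
  · dsimp only
    nlinarith [mul_nonneg hjsp.le (show (0:ℝ) ≤ -s*L - c by linarith)]
  · dsimp only
    have hn1 : (0:ℝ) ≤ L*js*(c*L-s)/2 := by
      nlinarith [mul_nonneg (mul_nonneg (show (0:ℝ) ≤ L by linarith) hjsp.le)
        (show (0:ℝ) ≤ c*L - s by nlinarith)]
    have hn2 : (0:ℝ) ≤ (-s*L-c)*js/2 := by
      nlinarith [mul_nonneg hjsp.le (show (0:ℝ) ≤ -s*L - c by linarith)]
    rw [show (-(L*js) * ((s-c*L)/2) - 0 * ((c+s*L)/2) : ℝ) = L*js*(c*L-s)/2 from by ring,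
      show ((c+s*L)/2 * -js - (s-c*L)/2 * 0 : ℝ) = (-s*L-c)*js/2 from by ring,
      abs_of_nonneg hn1, abs_of_nonneg hn2]
    -- need : js*(c*L^2 - 2*s*L - c) > 1 = 2*(-s)*js
    have key : 0 < c*(L^2-1) + (-2*s)*(L-1) :=
      add_pos_of_nonneg_of_pos (mul_nonneg hc.le (by nlinarith)) (by nlinarith)
    nlinarith [mul_pos hjsp key, hjs, mul_pos hjsp hsp]

lemma strict_case (c s L : ℝ) (h1 : c^2 + s^2 = 1) (hL : 1 < L) (hne : s ≠ c) :
    1/4 < volume (F c s L) := by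
  -- reduce to c ≥ 0 via F_neg, then case on signs
  have main : ∀ c' s', 0 < c' → c'^2 + s'^2 = 1 → s' ≠ c' → 1/4 < volume (F c' s' L) := by
    intro c' s' hc' h1' hne'
    rcases lt_trichotomy s' 0 with hs' | hs' | hs'
    · -- s' < 0
      rcases le_or_gt (-s') (c'*L) with h2 | h2
      · rcases le_or_gt c' (-s'*L) with h3 | h3
        · exact case_neg1 c' s' L hc' hs' h1' hL h2 h3
        · -- c' > -s'*L : swap + neg
          rw [F_swap, ← F_neg]
          exact case_neg2 (-s') (-c') L (by linarith) (by linarith) (by nlinarith) hL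
            (by nlinarith)
      · exact case_neg2 c' s' L hc' hs' h1' hL h2
    · -- s' = 0 : c'^2 = 1, use swap + horiz
      rw [F_swap]
      subst hs'
      exact case_horiz c' L (by nlinarith) hL
    · -- s' > 0
      rcases le_or_gt s' (c'*L) with h2 | h2
      · rcases le_or_gt c' (s'*L) with h3 | h3
        · exact case_mid c' s' L hc' hs' h1' hL h2 h3 hne'
        · rw [F_swap]
          exact case_high s' c' L hs' hc' (by nlinarith) hL h3
      · exact case_high c' s' L hc' hs' h1' hL h2
  rcases lt_trichotomy c 0 with hc | hc | hc
  · rw [← F_neg]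
    exact main (-c) (-s) (by linarith) (by nlinarith) (by intro h; exact hne (by linarith))
  · -- c = 0 : s^2 = 1
    subst hc
    exact case_horiz s L (by nlinarith) hL
  · exact main c s hc h1 hne

lemma rect_inter_Q (th L : ℝ) : rect (0, 0) th L ∩ Q = F (Real.cos th) (Real.sin th) L := by
  ext p
  simp [rect, Q, F, and_assoc]

/-- For a `1 × L` rectangle with `L > 1` centered at the corner of a quarter-plane, the
footprint area is exactly `1/4` in the symmetric 45-degree positions, and strictly greater
than `1/4` for every other orientation. -/
theorem rectangle_corner_footprint (L : ℝ) (hL : 1 < L) (θ : ℝ) :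
    ((∃ k : ℤ, θ = π / 4 + k * π) → volume (rect (0, 0) θ L ∩ Q) = 1 / 4) ∧
      ((¬∃ k : ℤ, θ = π / 4 + k * π) → volume (rect (0, 0) θ L ∩ Q) > 1 / 4) := by
  constructor
  · rintro ⟨k, rfl⟩
    set th := π / 4 + k * π with hth
    have h0 : Real.sin (th - π/4) = 0 := by
      rw [show th - π/4 = (k:ℝ) * π from by rw [hth]; ring]
      exact Real.sin_int_mul_pi k
    rw [Real.sin_sub, Real.cos_pi_div_four, Real.sin_pi_div_four] at h0
    have hsc : Real.sin th = Real.cos th := by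
      have hs2 : (Real.sqrt 2) / 2 ≠ 0 := by positivity
      have : (Real.sin th - Real.cos th) * (Real.sqrt 2 / 2) = 0 := by linarith
      rcases mul_eq_zero.mp this with h | h
      · linarith
      · exact absurd h hs2
    have hc2 : (Real.cos th)^2 = 1/2 := by
      have := Real.sin_sq_add_cos_sq th
      rw [hsc] at this
      linarith
    rw [rect_inter_Q, hsc]
    exact eq_case (Real.cos th) L hc2 hL
  · intro h
    have hsc : Real.sin θ ≠ Real.cos θ := by
      intro heq
      apply h
      have h0 : Real.sin (θ - π/4) = 0 := by
        rw [Real.sin_sub, Real.cos_pi_div_four, Real.sin_pi_div_four, heq]; ring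
      rcases Real.sin_eq_zero_iff.mp h0 with ⟨n, hn⟩
      exact ⟨n, by linarith⟩
    rw [rect_inter_Q]
    exact strict_case (Real.cos θ) (Real.sin θ) L
      (by rw [add_comm]; exact Real.sin_sq_add_cos_sq θ) hL hsc
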